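/- Let t be a positive integer. (a) If t ≥ 5, then t! < 5^((t²−3t+1)/3), i.e., (t!)³ < 5^(t²−3t+1). (b) If t ≥ 4, then t! < 2^(4t(t−3)/3), i.e., (t!)³ < 2^(4t(t−3)). -/

import Mathlib

lemma aux_a (k : ℕ) : (Nat.factorial (k + 5)) ^ 3 < 5 ^ (k ^ 2 + 7 * k + 11) := by
  induction k with
  | zero => decide
  | succ k ih =>
      have hfac : Nat.factorial (k + 6) = (k + 6) * Nat.factorial (k + 5) := rfl
      have hcube : (k + 6) ^ 3 ≤ 5 ^ (2 * k + 8) := by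
        have h1 : k + 6 < 2 ^ (k + 6) := Nat.lt_two_pow_self
        have h2 : (k + 6) ^ 3 ≤ (2 ^ (k + 6)) ^ 3 :=
          Nat.pow_le_pow_left h1.le 3
        have h3 : (2 ^ (k + 6)) ^ 3 = 2 ^ (3 * k) * 2 ^ 18 := by
          rw [← pow_mul, ← pow_add]; ring_nf
        have h4 : 2 ^ (3 * k) ≤ 5 ^ (2 * k) := by
          calc 2 ^ (3 * k) = 8 ^ k := by rw [pow_mul]; norm_num
            _ ≤ 25 ^ k := Nat.pow_le_pow_left (by norm_num) k
            _ = 5 ^ (2 * k) := by rw [pow_mul]; norm_num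
        have h5 : (2 : ℕ) ^ 18 ≤ 5 ^ 8 := by norm_num
        calc (k + 6) ^ 3 ≤ 2 ^ (3 * k) * 2 ^ 18 := by rw [← h3]; exact h2
          _ ≤ 5 ^ (2 * k) * 5 ^ 8 := Nat.mul_le_mul h4 h5
          _ = 5 ^ (2 * k + 8) := by rw [← pow_add]
      have hexp : (k + 1) ^ 2 + 7 * (k + 1) + 11 = (2 * k + 8) + (k ^ 2 + 7 * k + 11) := by
        ring
      calc (Nat.factorial (k + 6)) ^ 3
          = (k + 6) ^ 3 * (Nat.factorial (k + 5)) ^ 3 := by rw [hfac]; ring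
        _ < (k + 6) ^ 3 * 5 ^ (k ^ 2 + 7 * k + 11) :=
            mul_lt_mul_of_pos_left ih (pow_pos (Nat.succ_pos _) 3)
        _ ≤ 5 ^ (2 * k + 8) * 5 ^ (k ^ 2 + 7 * k + 11) :=
            Nat.mul_le_mul_right _ hcube
        _ = 5 ^ ((k + 1) ^ 2 + 7 * (k + 1) + 11) := by rw [hexp, ← pow_add]

set_option maxHeartbeats 1000000 in
lemma aux_b (k : ℕ) : (Nat.factorial (k + 4)) ^ 3 < 2 ^ (4 * (k + 4) * (k + 1)) := by
  induction k with
  | zero => decide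
  | succ k ih =>
      have hfac : Nat.factorial (k + 5) = (k + 5) * Nat.factorial (k + 4) := rfl
      have hcube : (k + 5) ^ 3 ≤ 2 ^ (8 * k + 24) := by
        have h1 : k + 5 < 2 ^ (k + 5) := Nat.lt_two_pow_self
        have h2 : (k + 5) ^ 3 ≤ (2 ^ (k + 5)) ^ 3 := Nat.pow_le_pow_left h1.le 3
        have h3 : (2 ^ (k + 5)) ^ 3 = 2 ^ (3 * k + 15) := by
          rw [← pow_mul]; ring_nf
        calc (k + 5) ^ 3 ≤ 2 ^ (3 * k + 15) := by rw [← h3]; exact h2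
          _ ≤ 2 ^ (8 * k + 24) := Nat.pow_le_pow_right (by norm_num) (by omega)
      have hexp : 4 * (k + 1 + 4) * (k + 1 + 1) = (8 * k + 24) + 4 * (k + 4) * (k + 1) := by
        ring
      calc (Nat.factorial (k + 5)) ^ 3
          = (k + 5) ^ 3 * (Nat.factorial (k + 4)) ^ 3 := by rw [hfac]; ring
        _ < (k + 5) ^ 3 * 2 ^ (4 * (k + 4) * (k + 1)) :=
            mul_lt_mul_of_pos_left ih (pow_pos (Nat.succ_pos _) 3)
        _ ≤ 2 ^ (8 * k + 24) * 2 ^ (4 * (k + 4) * (k + 1)) :=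
            Nat.mul_le_mul_right _ hcube
        _ = 2 ^ (4 * (k + 1 + 4) * (k + 1 + 1)) := by rw [hexp, ← pow_add]

/-- Lemma 4.4 of [AB-Large-15]: (a) if `t ≥ 5` then `t! < 5^((t²-3t+1)/3)`, i.e.
`(t!)³ < 5^(t²-3t+1)`; (b) if `t ≥ 4` then `t! < 2^(4t(t-3)/3)`, i.e.
`(t!)³ < 2^(4t(t-3))`. -/
theorem factorial_lt_pow_bounds (t : ℕ) (ht : 0 < t) :
    (5 ≤ t → (Nat.factorial t) ^ 3 < 5 ^ (t ^ 2 - 3 * t + 1)) ∧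
    (4 ≤ t → (Nat.factorial t) ^ 3 < 2 ^ (4 * t * (t - 3))) := by
  constructor
  · intro h5
    obtain ⟨k, rfl⟩ : ∃ k, t = k + 5 := ⟨t - 5, by omega⟩
    have hsq : (k + 5) ^ 2 = k ^ 2 + 10 * k + 25 := by ring
    have hexp : (k + 5) ^ 2 - 3 * (k + 5) + 1 = k ^ 2 + 7 * k + 11 := by omega
    rw [hexp]; exact aux_a k
  · intro h4
    obtain ⟨k, rfl⟩ : ∃ k, t = k + 4 := ⟨t - 4, by omega⟩
    have hexp : (k + 4) - 3 = k + 1 := by omega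
    rw [hexp]; exact aux_b k
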